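/- arXiv:1909.11153 — 4 statements merged into one kernel-verified Lean document; each statement's English description precedes it below -/
import Mathlib

section
/- For every real a > 0, the integral over (0,∞) of (cosh t)^{-2a} dt equals 4^{a-1} B(a,a), where B is the Beta function. In particular, for an integer d ≥ 1, ∫₀^∞ (cosh t)^{-d} dt = 2^{d-2} Γ(d/2)² / Γ(d). -/
open Real MeasureTheory Set Filter

lemma myTanh_eq (x : ℝ) : Real.tanh x = 1 - 2 / (Real.exp (2 * x) + 1) := by
  rw [Real.tanh_eq_sinh_div_cosh, Real.sinh_eq, Real.cosh_eq]
  have h1 : Real.exp x ≠ 0 := (Real.exp_pos x).ne'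
  have h2 : Real.exp (2 * x) + 1 ≠ 0 := by positivity
  rw [Real.exp_neg, two_mul, Real.exp_add] at *
  field_simp
  ring

lemma myHasDerivAt_tanh (x : ℝ) :
    HasDerivAt Real.tanh ((Real.cosh x ^ 2)⁻¹) x := by
  have h := (Real.hasDerivAt_sinh x).div (Real.hasDerivAt_cosh x) (Real.cosh_pos x).ne'
  have e : (Real.cosh x * Real.cosh x - Real.sinh x * Real.sinh x) / Real.cosh x ^ 2
      = (Real.cosh x ^ 2)⁻¹ := by
    rw [show Real.cosh x * Real.cosh x - Real.sinh x * Real.sinh x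
        = Real.cosh x ^ 2 - Real.sinh x ^ 2 by ring, Real.cosh_sq_sub_sinh_sq, one_div]
  rw [e] at h
  have : Real.tanh = fun y => Real.sinh y / Real.cosh y :=
    funext Real.tanh_eq_sinh_div_cosh
  rw [this]
  exact h

lemma myTanh_strictMono : StrictMono Real.tanh :=
  strictMono_of_deriv_pos fun x => by
    rw [(myHasDerivAt_tanh x).deriv]
    positivity

lemma myTanh_lt_one (x : ℝ) : Real.tanh x < 1 := by
  rw [myTanh_eq]
  have : 0 < 2 / (Real.exp (2 * x) + 1) := by positivity
  linarith

lemma myTendsto_tanh : Tendsto Real.tanh atTop (nhds 1) := by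
  have h1 : Tendsto (fun x : ℝ => Real.exp (2 * x) + 1) atTop atTop := by
    apply Filter.tendsto_atTop_add_const_right
    exact Real.tendsto_exp_atTop.comp (tendsto_id.const_mul_atTop two_pos)
  have h2 : Tendsto (fun x : ℝ => 2 / (Real.exp (2 * x) + 1)) atTop (nhds 0) :=
    Tendsto.div_atTop tendsto_const_nhds h1
  have h3 : Tendsto (fun x : ℝ => 1 - 2 / (Real.exp (2 * x) + 1)) atTop (nhds (1 - 0)) :=
    tendsto_const_nhds.sub h2
  simpa [funext myTanh_eq] using h3

lemma myTanh_image : Real.tanh '' Set.Ioi 0 = Set.Ioo 0 1 := by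
  apply Set.Subset.antisymm
  · rintro y ⟨t, ht, rfl⟩
    exact ⟨by simpa using myTanh_strictMono ht, myTanh_lt_one t⟩
  · rintro y ⟨hy0, hy1⟩
    obtain ⟨t, ht⟩ := (myTendsto_tanh.eventually (eventually_gt_nhds hy1)).exists
    have hcont : Continuous Real.tanh := by
      have : Real.tanh = fun y => Real.sinh y / Real.cosh y := funext Real.tanh_eq_sinh_div_cosh
      rw [this]
      exact Real.continuous_sinh.div Real.continuous_cosh fun x => (Real.cosh_pos x).ne'
    have h0t : (0:ℝ) ≤ t := by
      by_contra h
      push_neg at h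
      have := myTanh_strictMono h
      simp only [Real.tanh_zero] at this
      linarith
    have hy : y ∈ Set.Icc (Real.tanh 0) (Real.tanh t) := by
      rw [Real.tanh_zero]
      exact ⟨hy0.le, ht.le⟩
    obtain ⟨x, hx, hxy⟩ := intermediate_value_Icc h0t hcont.continuousOn hy
    refine ⟨x, ?_, hxy⟩
    rcases eq_or_lt_of_le hx.1 with h | h
    · exfalso; rw [← h, Real.tanh_zero] at hxy; linarith
    · exact h

lemma myRealBeta {u v : ℝ} (hu : 0 < u) (hv : 0 < v) :
    ∫ x in Set.Ioo (0:ℝ) 1, x ^ (u - 1) * (1 - x) ^ (v - 1)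
      = Real.Gamma u * Real.Gamma v / Real.Gamma (u + v) := by
  have key := Complex.Gamma_mul_Gamma_eq_betaIntegral (s := (u:ℂ)) (t := (v:ℂ))
    (by simpa using hu) (by simpa using hv)
  have hbeta : Complex.betaIntegral (u:ℂ) (v:ℂ)
      = ((∫ x in Set.Ioo (0:ℝ) 1, x ^ (u - 1) * (1 - x) ^ (v - 1) : ℝ) : ℂ) := by
    rw [Complex.betaIntegral, intervalIntegral.integral_of_le zero_le_one,
      MeasureTheory.integral_Ioc_eq_integral_Ioo]
    have hcong : ∫ x in Set.Ioo (0:ℝ) 1, (x:ℂ) ^ ((u:ℂ) - 1) * (1 - (x:ℂ)) ^ ((v:ℂ) - 1)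
        = ∫ x in Set.Ioo (0:ℝ) 1, ((x ^ (u - 1) * (1 - x) ^ (v - 1) : ℝ) : ℂ) := by
      apply setIntegral_congr_fun measurableSet_Ioo
      intro x hx
      simp only [Complex.ofReal_mul]
      rw [Complex.ofReal_cpow hx.1.le, Complex.ofReal_cpow (by linarith [hx.2] : (0:ℝ) ≤ 1 - x)]
      push_cast
      ring
    rw [hcong]
    exact integral_ofReal
  rw [hbeta, ← Complex.ofReal_add, Complex.Gamma_ofReal, Complex.Gamma_ofReal,
    Complex.Gamma_ofReal, ← Complex.ofReal_mul, ← Complex.ofReal_mul] at key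
  have := Complex.ofReal_inj.mp key
  have hG : Real.Gamma (u + v) ≠ 0 := (Real.Gamma_pos_of_pos (by linarith)).ne'
  field_simp
  linarith [this]
lemma myKey (a : ℝ) (ha : 0 < a) :
    ∫ t in Set.Ioi (0 : ℝ), (Real.cosh t) ^ (-(2 * a)) =
      4 ^ (a - 1) * (Real.Gamma a ^ 2 / Real.Gamma (2 * a)) := by
  -- Step 1: tanh substitution
  have sub1 : ∫ u in Set.Ioo (0:ℝ) 1, (1 - u ^ 2) ^ (a - 1)
      = ∫ t in Set.Ioi (0:ℝ), |(Real.cosh t ^ 2)⁻¹| • (1 - Real.tanh t ^ 2) ^ (a - 1) := by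
    rw [← myTanh_image]
    exact integral_image_eq_integral_abs_deriv_smul measurableSet_Ioi
      (fun t _ => (myHasDerivAt_tanh t).hasDerivWithinAt) myTanh_strictMono.injective.injOn _
  have e1 : ∀ t ∈ Set.Ioi (0:ℝ),
      |(Real.cosh t ^ 2)⁻¹| • (1 - Real.tanh t ^ 2) ^ (a - 1)
        = Real.cosh t ^ (-(2 * a)) := by
    intro t _
    have hc : (0:ℝ) < Real.cosh t := Real.cosh_pos t
    have htanh : 1 - Real.tanh t ^ 2 = (Real.cosh t ^ 2)⁻¹ := by
      rw [Real.tanh_eq_sinh_div_cosh, div_pow]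
      field_simp
      exact Real.cosh_sq_sub_sinh_sq t
    have hinv : (Real.cosh t ^ 2)⁻¹ = Real.cosh t ^ (-2 : ℝ) := by
      rw [← Real.rpow_natCast (Real.cosh t) 2, ← Real.rpow_neg hc.le]
      norm_num
    rw [htanh, hinv, smul_eq_mul, abs_of_pos (Real.rpow_pos_of_pos hc _),
      ← Real.rpow_mul hc.le, ← Real.rpow_add hc]
    congr 1
    ring
  have sub1' : ∫ u in Set.Ioo (0:ℝ) 1, (1 - u ^ 2) ^ (a - 1)
      = ∫ t in Set.Ioi (0:ℝ), Real.cosh t ^ (-(2 * a)) := by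
    rw [sub1]
    exact setIntegral_congr_fun measurableSet_Ioi e1
  -- Step 2: u = sqrt v substitution
  have sq_image : (fun u : ℝ => u ^ 2) '' Set.Ioo 0 1 = Set.Ioo 0 1 := by
    apply Set.Subset.antisymm
    · rintro y ⟨u, ⟨hu0, hu1⟩, rfl⟩
      exact ⟨pow_pos hu0 2, pow_lt_one₀ hu0.le hu1 two_ne_zero⟩
    · rintro v ⟨hv0, hv1⟩
      exact ⟨Real.sqrt v, ⟨Real.sqrt_pos.mpr hv0, (Real.sqrt_lt' one_pos).mpr (by nlinarith)⟩,
        Real.sq_sqrt hv0.le⟩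
  have sq_inj : Set.InjOn (fun u : ℝ => u ^ 2) (Set.Ioo 0 1) := by
    intro x hx y hy h
    simp only at h
    nlinarith [hx.1, hy.1]
  have sub2 : ∫ v in Set.Ioo (0:ℝ) 1, v ^ ((1:ℝ)/2 - 1) * (1 - v) ^ (a - 1)
      = ∫ u in Set.Ioo (0:ℝ) 1,
          |2 * u| • ((u ^ 2 : ℝ) ^ ((1:ℝ)/2 - 1) * (1 - u ^ 2) ^ (a - 1)) := by
    have h := integral_image_eq_integral_abs_deriv_smul measurableSet_Ioo
      (fun u (_ : u ∈ Set.Ioo (0:ℝ) 1) => by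
        simpa using (hasDerivAt_pow 2 u).hasDerivWithinAt (s := Set.Ioo (0:ℝ) 1)) sq_inj
      (fun v => v ^ ((1:ℝ)/2 - 1) * (1 - v) ^ (a - 1))
    rw [sq_image] at h
    exact h
  have e2 : ∀ u ∈ Set.Ioo (0:ℝ) 1,
      |2 * u| • ((u ^ 2 : ℝ) ^ ((1:ℝ)/2 - 1) * (1 - u ^ 2) ^ (a - 1))
        = 2 * (1 - u ^ 2) ^ (a - 1) := by
    intro u hu
    have hu0 : (0:ℝ) < u := hu.1
    have h1 : (u ^ 2 : ℝ) ^ ((1:ℝ)/2 - 1) = u⁻¹ := by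
      rw [← Real.rpow_natCast u 2, ← Real.rpow_mul hu0.le,
        show ((2:ℕ):ℝ) * ((1:ℝ)/2 - 1) = -1 by norm_num, Real.rpow_neg_one]
    rw [h1, smul_eq_mul, abs_of_pos (by linarith : (0:ℝ) < 2 * u)]
    field_simp
  have sub2' : ∫ v in Set.Ioo (0:ℝ) 1, v ^ ((1:ℝ)/2 - 1) * (1 - v) ^ (a - 1)
      = 2 * ∫ u in Set.Ioo (0:ℝ) 1, (1 - u ^ 2) ^ (a - 1) := by
    rw [sub2, setIntegral_congr_fun measurableSet_Ioo e2, integral_const_mul]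
  -- Step 3: beta evaluation
  have hbeta := myRealBeta (u := 1/2) (v := a) (by norm_num) ha
  -- combine
  have hGpos : 0 < Real.Gamma a := Real.Gamma_pos_of_pos ha
  have hGhalf : 0 < Real.Gamma (1/2 + a) := Real.Gamma_pos_of_pos (by linarith)
  have hdup := Real.Gamma_mul_Gamma_add_half a
  have hsqrtpi : (0:ℝ) < Real.sqrt π := Real.sqrt_pos.mpr Real.pi_pos
  have hG2a : 0 < Real.Gamma (2 * a) := Real.Gamma_pos_of_pos (by linarith)
  have hGammahalf : Real.Gamma (1/2) = Real.sqrt π := Real.Gamma_one_half_eq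
  have hIval : ∫ u in Set.Ioo (0:ℝ) 1, (1 - u ^ 2) ^ (a - 1)
      = Real.sqrt π * Real.Gamma a / (2 * Real.Gamma (1/2 + a)) := by
    have h := sub2'.symm.trans hbeta
    rw [hGammahalf, eq_div_iff hGhalf.ne'] at h
    rw [eq_div_iff (by positivity : (2 * Real.Gamma (1/2 + a)) ≠ 0)]
    linarith [h]
  have hpow : (4:ℝ) ^ (a - 1) = (2:ℝ) ^ (2 * a - 2) := by
    have h4 : (4:ℝ) = (2:ℝ) ^ (2:ℝ) := by
      rw [show ((2:ℝ):ℝ) = ((2:ℕ):ℝ) by norm_num, Real.rpow_natCast]; norm_num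
    rw [h4, ← Real.rpow_mul (by norm_num)]
    congr 1
    ring
  have hpow2 : (2:ℝ) ^ (2 * a - 2) * ((2:ℝ) ^ (1 - 2 * a)) = 2⁻¹ := by
    rw [← Real.rpow_add two_pos, show (2*a - 2 + (1 - 2*a)) = -1 by ring,
      Real.rpow_neg_one]
  rw [← sub1', hIval, hpow]
  have key : Real.Gamma a * Real.Gamma (1/2 + a)
      = Real.Gamma (2 * a) * (2:ℝ) ^ (1 - 2 * a) * Real.sqrt π := by
    rw [add_comm]
    exact hdup
  rw [mul_div_assoc', div_eq_div_iff (by positivity) hG2a.ne']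
  linear_combination ((-2) * (2:ℝ) ^ (2*a - 2) * Real.Gamma a) * key
    + ((-2) * Real.Gamma a * Real.Gamma (2*a) * Real.sqrt π) * hpow2

theorem integral_cosh_rpow (a : ℝ) (ha : 0 < a) :
    (∫ t in Set.Ioi (0 : ℝ), (Real.cosh t) ^ (-(2 * a)) =
      4 ^ (a - 1) * (Real.Gamma a ^ 2 / Real.Gamma (2 * a))) ∧
    ∀ d : ℕ, 1 ≤ d →
      ∫ t in Set.Ioi (0 : ℝ), (Real.cosh t) ^ (-(d : ℝ)) =
        2 ^ ((d : ℝ) - 2) * Real.Gamma ((d : ℝ) / 2) ^ 2 / Real.Gamma d := by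
  constructor
  · exact myKey a ha
  · intro d hd
    have hd0 : (0:ℝ) < (d:ℝ) := by exact_mod_cast hd
    have h := myKey ((d:ℝ)/2) (by linarith)
    rw [show 2 * ((d:ℝ)/2) = (d:ℝ) by ring] at h
    rw [h]
    have hpow : (4:ℝ) ^ ((d:ℝ)/2 - 1) = (2:ℝ) ^ ((d:ℝ) - 2) := by
      have h4 : (4:ℝ) = (2:ℝ) ^ (2:ℝ) := by
        rw [show ((2:ℝ):ℝ) = ((2:ℕ):ℝ) by norm_num, Real.rpow_natCast]; norm_num
      rw [h4, ← Real.rpow_mul (by norm_num)]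
      congr 1
      ring
    rw [hpow, mul_div_assoc]
end

section
/- For every real q with 1 < q ≤ 2, one has (q+3)(q-1)^{1/q - 1} ≤ 6. -/
open Real

lemma bellman_helper (t : ℝ) (ht0 : 0 < t) (ht1 : t ≤ 1) (n : ℕ) (hn : 0 < n)
    (hns : (n : ℝ) * t ≤ 1 + t)
    (hpoly : (t + 4) ^ n * (1 + t + n * (1 - t)) ≤ 6 ^ n * (1 + t)) :
    (t + 4) * t ^ (-(t / (1 + t))) ≤ 6 := by
  have h1t : (0:ℝ) < 1 + t := by linarith
  have hp0 : 0 ≤ (n : ℝ) * t / (1 + t) := by positivity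
  have hp1 : (n : ℝ) * t / (1 + t) ≤ 1 := by
    rw [div_le_one h1t]; exact hns
  have hApos : 0 ≤ (t + 4) * t ^ (-(t / (1 + t))) := by positivity
  have key : ((t + 4) * t ^ (-(t / (1 + t)))) ^ n ≤ 6 ^ n := by
    have hrw : (t ^ (-(t / (1 + t)))) ^ n = (1 + (1 / t - 1)) ^ ((n : ℝ) * t / (1 + t)) := by
      have h1 : 1 + (1 / t - 1) = t⁻¹ := by field_simp; ring
      rw [h1, Real.inv_rpow ht0.le, ← Real.rpow_neg ht0.le, ← Real.rpow_natCast (t ^ _) n,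
        ← Real.rpow_mul ht0.le]
      ring_nf
    have hbern : (1 + (1 / t - 1)) ^ ((n : ℝ) * t / (1 + t)) ≤
        1 + ((n : ℝ) * t / (1 + t)) * (1 / t - 1) := by
      apply rpow_one_add_le_one_add_mul_self _ hp0 hp1
      have : 0 ≤ 1 / t - 1 := by
        rw [sub_nonneg, le_div_iff₀ ht0, one_mul]; exact ht1
      linarith
    have heq : 1 + ((n : ℝ) * t / (1 + t)) * (1 / t - 1) = (1 + t + n * (1 - t)) / (1 + t) := by
      field_simp
    calc ((t + 4) * t ^ (-(t / (1 + t)))) ^ n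
        = (t + 4) ^ n * (t ^ (-(t / (1 + t)))) ^ n := by rw [mul_pow]
      _ ≤ (t + 4) ^ n * ((1 + t + n * (1 - t)) / (1 + t)) := by
          apply mul_le_mul_of_nonneg_left _ (by positivity)
          rw [hrw]; rw [heq] at hbern; exact hbern
      _ ≤ 6 ^ n := by
          rw [← mul_div_assoc, div_le_iff₀ h1t]
          exact hpoly
  exact le_of_pow_le_pow_left₀ hn.ne' (by norm_num) key

theorem bellman_constant_inequality (q : ℝ) (hq1 : 1 < q) (hq2 : q ≤ 2) :
    (q + 3) * (q - 1) ^ (1 / q - 1) ≤ 6 := by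
  set t := q - 1 with htdef
  have ht0 : 0 < t := by simp [htdef]; linarith
  have ht1 : t ≤ 1 := by simp [htdef]; linarith
  have hq0 : q ≠ 0 := by linarith
  have hexp : 1 / q - 1 = -(t / (1 + t)) := by
    have h1 : 1 + t = q := by simp [htdef]
    rw [h1]; field_simp; linarith
  have hq3 : q + 3 = t + 4 := by simp [htdef]; ring
  rw [hexp, hq3]
  rcases le_or_gt t (1/3) with h | h
  · apply bellman_helper t ht0 ht1 4 (by norm_num) (by push_cast; linarith)
    push_cast
    nlinarith [sq_nonneg t, sq_nonneg (t+4), pow_pos ht0 3, pow_pos ht0 5, mul_pos ht0 ht0]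
  rcases le_or_gt t (1/2) with h2 | h2
  · apply bellman_helper t ht0 ht1 3 (by norm_num) (by push_cast; linarith)
    push_cast
    nlinarith [pow_pos ht0 4, pow_pos ht0 3, sq_nonneg t]
  · apply bellman_helper t ht0 ht1 1 (by norm_num) (by push_cast; linarith)
    push_cast
    nlinarith
end

section
/- Let d ≥ 1, t > 0, and define K_t(x,y) = C_d (sinh 2t)^{-d/2} exp(-|x-y|²/(4 tanh t) - (tanh t/4)|x+y|²) with C_d = (2π)^{-d/2} π^{-1/2}. Then for every y ∈ ℝ^d, ∫_{ℝ^d} |x - y| K_t(x,y) dx ≤ (2/√π) · (Γ((d+1)/2)/Γ(d/2)) · √(tanh t) / (cosh t)^d. -/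
open Real MeasureTheory

/-- The normalized Mehler kernel `K_t(x,y)`. -/
noncomputable def mehlerKernel (d : ℕ) (t : ℝ) (x y : EuclideanSpace ℝ (Fin d)) : ℝ :=
  (2 * Real.pi) ^ (-(d : ℝ) / 2) * Real.pi ^ (-(1 : ℝ) / 2) *
    (Real.sinh (2 * t)) ^ (-(d : ℝ) / 2) *
    Real.exp (-‖x - y‖ ^ 2 / (4 * Real.tanh t) - Real.tanh t / 4 * ‖x + y‖ ^ 2)

section MehlerAux

open Set Module

private lemma mehler_aux_integrable {d : ℕ} {b : ℝ} (hb : 0 < b) :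
    Integrable (fun x : EuclideanSpace ℝ (Fin d) => ‖x‖ * rexp (-b * ‖x‖ ^ 2)) := by
  have h1 : Integrable (fun x : EuclideanSpace ℝ (Fin d) => rexp (-(b / 2) * ‖x‖ ^ 2)) := by
    have h := (GaussianFourier.integrable_cexp_neg_mul_sq_norm_add
      (V := EuclideanSpace ℝ (Fin d)) (b := (b / 2 : ℂ)) (by simpa using half_pos hb) 0 0).norm
    simpa [Complex.norm_exp, neg_mul, ← Complex.ofReal_pow] using h
  refine (h1.const_mul (max 1 (2 / b))).mono' ?_ ?_
  · exact (continuous_norm.mul (by continuity)).aestronglyMeasurable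
  · filter_upwards with x
    set r := ‖x‖ with hr
    have hr0 : 0 ≤ r := norm_nonneg _
    have key : r * rexp (-(b / 2) * r ^ 2) ≤ max 1 (2 / b) := by
      rw [show -(b / 2) * r ^ 2 = -((b / 2) * r ^ 2) by ring, Real.exp_neg,
        mul_inv_le_iff₀' (Real.exp_pos _)]
      have hX := Real.add_one_le_exp ((b / 2) * r ^ 2)
      have hXpos := Real.exp_pos ((b / 2) * r ^ 2)
      rcases le_total r 1 with h | h
      · have h1' : (1:ℝ) ≤ max 1 (2 / b) := le_max_left _ _
        nlinarith
      · have h2' : 2 / b ≤ max 1 (2 / b) := le_max_right _ _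
        have hbr : b / 2 * r ≤ rexp (b / 2 * r ^ 2) := by nlinarith
        have hre : r = (b / 2 * r) * (2 / b) := by field_simp
        calc r = (b / 2 * r) * (2 / b) := hre
          _ ≤ rexp (b / 2 * r ^ 2) * max 1 (2 / b) :=
              mul_le_mul hbr h2' (by positivity) hXpos.le
    have hnorm : ‖r * rexp (-b * r ^ 2)‖ = r * rexp (-b * r ^ 2) := by
      rw [Real.norm_eq_abs, abs_of_nonneg (by positivity)]
    rw [hnorm, show -b * r ^ 2 = -(b/2) * r ^ 2 + -(b/2) * r ^ 2 by ring, Real.exp_add]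
    calc r * (rexp (-(b/2) * r^2) * rexp (-(b/2) * r^2))
        = (r * rexp (-(b/2) * r^2)) * rexp (-(b/2) * r^2) := by ring
      _ ≤ max 1 (2 / b) * rexp (-(b/2) * r^2) :=
          mul_le_mul_of_nonneg_right key (Real.exp_pos _).le

private lemma mehler_aux_moment (d : ℕ) (hd : 1 ≤ d) {b : ℝ} (hb : 0 < b) :
    ∫ x : EuclideanSpace ℝ (Fin d), ‖x‖ * rexp (-b * ‖x‖ ^ 2) =
      π ^ ((d : ℝ) / 2) * b ^ (-((d : ℝ) + 1) / 2) *
        (Real.Gamma (((d : ℝ) + 1) / 2) / Real.Gamma ((d : ℝ) / 2)) := by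
  haveI : Nonempty (Fin d) := ⟨⟨0, hd⟩⟩
  haveI : Nontrivial (EuclideanSpace ℝ (Fin d)) := by
    refine ⟨0, EuclideanSpace.single ⟨0, hd⟩ 1, fun h ↦ ?_⟩
    have := congrArg (fun v : EuclideanSpace ℝ (Fin d) => v ⟨0, hd⟩) h.symm
    simp [EuclideanSpace.single] at this
  have hdim : finrank ℝ (EuclideanSpace ℝ (Fin d)) = d := finrank_euclideanSpace_fin
  have h0 : ∫ x : EuclideanSpace ℝ (Fin d), ‖x‖ * rexp (-b * ‖x‖ ^ 2) =
      (finrank ℝ (EuclideanSpace ℝ (Fin d))) •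
        ((volume (Metric.ball (0 : EuclideanSpace ℝ (Fin d)) 1)).toReal •
          ∫ r in Ioi (0 : ℝ), r ^ (finrank ℝ (EuclideanSpace ℝ (Fin d)) - 1) •
            (r * rexp (-b * r ^ 2))) :=
    MeasureTheory.integral_fun_norm_addHaar volume (fun r : ℝ => r * rexp (-b * r ^ 2))
  rw [h0, hdim]
  have hvol : (volume (Metric.ball (0 : EuclideanSpace ℝ (Fin d)) 1)).toReal =
      Real.sqrt π ^ d / Real.Gamma (d / 2 + 1) := by
    rw [EuclideanSpace.volume_ball]
    simp [Fintype.card_fin,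
      ENNReal.toReal_ofReal (by positivity : (0:ℝ) ≤ Real.sqrt π ^ d / Real.Gamma (d / 2 + 1))]
  have hint : ∫ r in Ioi (0 : ℝ), r ^ (d - 1) • (r * rexp (-b * r ^ 2)) =
      b ^ (-((d : ℝ) + 1) / 2) * (1 / 2) * Real.Gamma (((d : ℝ) + 1) / 2) := by
    rw [show ∫ r in Ioi (0 : ℝ), r ^ (d - 1) • (r * rexp (-b * r ^ 2)) =
        ∫ r in Ioi (0 : ℝ), r ^ (d : ℝ) * rexp (-b * r ^ (2 : ℝ)) from
      setIntegral_congr_fun measurableSet_Ioi fun r hr => by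
        have h1 : r ^ ((d : ℕ) : ℝ) = r ^ (d : ℕ) := Real.rpow_natCast r d
        have h2 : r ^ (2 : ℝ) = r ^ (2 : ℕ) := by
          rw [show ((2:ℝ)) = ((2:ℕ):ℝ) by norm_num, Real.rpow_natCast]
        rw [smul_eq_mul, h1, h2, show d = (d - 1) + 1 by omega]
        simp only [Nat.add_sub_cancel, pow_succ]
        ring]
    rw [integral_rpow_mul_exp_neg_mul_rpow two_pos
      (lt_of_lt_of_le neg_one_lt_zero (Nat.cast_nonneg d)) hb]
  rw [hvol, hint]
  have hsq : Real.sqrt π ^ d = π ^ ((d : ℝ) / 2) := by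
    rw [Real.sqrt_eq_rpow, ← Real.rpow_natCast (π ^ ((1:ℝ)/2)) d, ← Real.rpow_mul pi_pos.le]
    ring_nf
  have hdpos : (0 : ℝ) < d := by exact_mod_cast hd
  have hG0 : Real.Gamma ((d : ℝ) / 2 + 1) = ((d : ℝ) / 2) * Real.Gamma ((d : ℝ) / 2) := by
    rw [Real.Gamma_add_one (by positivity : ((d:ℝ)/2) ≠ 0)]
  have hGpos : 0 < Real.Gamma ((d : ℝ) / 2) := Real.Gamma_pos_of_pos (by positivity)
  rw [nsmul_eq_mul, smul_eq_mul, hsq, hG0]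
  field_simp

private lemma mehler_aux_const (d : ℕ) (t : ℝ) (ht : 0 < t) :
    (2 * π) ^ (-(d : ℝ) / 2) * π ^ (-(1 : ℝ) / 2) * (Real.sinh (2 * t)) ^ (-(d : ℝ) / 2) *
      (π ^ ((d : ℝ) / 2) * (1 / (4 * Real.tanh t)) ^ (-((d : ℝ) + 1) / 2)) =
    2 / Real.sqrt π * (Real.sqrt (Real.tanh t) / Real.cosh t ^ d) := by
  have hπ := pi_pos
  have hs : 0 < Real.sinh t := by
    have := Real.sinh_lt_sinh (x := 0) (y := t)
    simp only [Real.sinh_zero] at this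
    exact this.mpr ht
  have hc : 0 < Real.cosh t := Real.cosh_pos t
  have hτ : 0 < Real.tanh t := by
    rw [Real.tanh_eq_sinh_div_cosh]; positivity
  have hL : 0 < (2 * π) ^ (-(d : ℝ) / 2) * π ^ (-(1 : ℝ) / 2) *
      (Real.sinh (2 * t)) ^ (-(d : ℝ) / 2) *
      (π ^ ((d : ℝ) / 2) * (1 / (4 * Real.tanh t)) ^ (-((d : ℝ) + 1) / 2)) := by
    have hs2 : 0 < Real.sinh (2 * t) := by
      rw [Real.sinh_two_mul]; positivity
    positivity
  have hR : 0 < 2 / Real.sqrt π * (Real.sqrt (Real.tanh t) / Real.cosh t ^ d) := by positivity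
  rw [← Real.exp_log hL, ← Real.exp_log hR]
  congr 1
  rw [Real.tanh_eq_sinh_div_cosh, Real.sinh_two_mul]
  rw [show (4:ℝ) * (Real.sinh t / Real.cosh t) = (2 * 2 * Real.sinh t) / Real.cosh t by ring,
    one_div_div]
  rw [Real.log_mul
        (by positivity : ((2:ℝ)*π) ^ (-(d:ℝ)/2) * π ^ (-(1:ℝ)/2) * ((2:ℝ)*Real.sinh t*Real.cosh t) ^ (-(d:ℝ)/2) ≠ 0)
        (by positivity : (π:ℝ) ^ ((d:ℝ)/2) * (Real.cosh t/(2*2*Real.sinh t)) ^ (-((d:ℝ)+1)/2) ≠ 0),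
      Real.log_mul (by positivity : ((2:ℝ)*π) ^ (-(d:ℝ)/2) * π ^ (-(1:ℝ)/2) ≠ 0)
        (by positivity : ((2:ℝ)*Real.sinh t*Real.cosh t) ^ (-(d:ℝ)/2) ≠ 0),
      Real.log_mul (by positivity : ((2:ℝ)*π) ^ (-(d:ℝ)/2) ≠ 0)
        (by positivity : (π:ℝ) ^ (-(1:ℝ)/2) ≠ 0),
      Real.log_mul (by positivity : (π:ℝ) ^ ((d:ℝ)/2) ≠ 0)
        (by positivity : (Real.cosh t/(2*2*Real.sinh t)) ^ (-((d:ℝ)+1)/2) ≠ 0),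
      Real.log_mul (by positivity : (2:ℝ)/Real.sqrt π ≠ 0)
        (by positivity : Real.sqrt (Real.sinh t/Real.cosh t) / Real.cosh t ^ d ≠ 0),
      Real.log_rpow (by positivity : (0:ℝ) < 2*π),
      Real.log_rpow (by positivity : (0:ℝ) < 2*Real.sinh t*Real.cosh t),
      Real.log_rpow hπ, Real.log_rpow hπ,
      Real.log_rpow (by positivity : (0:ℝ) < Real.cosh t/(2*2*Real.sinh t)),
      Real.log_div (two_ne_zero) (by positivity : Real.sqrt π ≠ 0),
      Real.log_div (by positivity : Real.sqrt (Real.sinh t/Real.cosh t) ≠ 0)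
        (by positivity : (Real.cosh t:ℝ)^d ≠ 0),
      Real.log_sqrt hπ.le, Real.log_sqrt (by positivity : (0:ℝ) ≤ Real.sinh t/Real.cosh t),
      Real.log_pow,
      Real.log_mul (two_ne_zero) hπ.ne',
      Real.log_mul (by positivity : (2:ℝ)*Real.sinh t ≠ 0) hc.ne',
      Real.log_mul (two_ne_zero) hs.ne',
      Real.log_div hc.ne' (by positivity : (2:ℝ)*2*Real.sinh t ≠ 0),
      Real.log_mul (by positivity : (2:ℝ)*2 ≠ 0) hs.ne',
      Real.log_mul (two_ne_zero (α := ℝ)) (two_ne_zero),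
      Real.log_div hs.ne' hc.ne']
  ring

end MehlerAux

theorem mehler_kernel_first_moment (d : ℕ) (hd : 1 ≤ d) (t : ℝ) (ht : 0 < t)
    (y : EuclideanSpace ℝ (Fin d)) :
    ∫ x : EuclideanSpace ℝ (Fin d), ‖x - y‖ * mehlerKernel d t x y ≤
      (2 / Real.sqrt Real.pi) *
        (Real.Gamma (((d : ℝ) + 1) / 2) / Real.Gamma ((d : ℝ) / 2)) *
        (Real.sqrt (Real.tanh t) / Real.cosh t ^ d) := by
  have hπ := pi_pos
  have hs : 0 < Real.sinh t := by
    have := Real.sinh_lt_sinh (x := 0) (y := t)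
    simp only [Real.sinh_zero] at this
    exact this.mpr ht
  have hc : 0 < Real.cosh t := Real.cosh_pos t
  have hτ : 0 < Real.tanh t := by
    rw [Real.tanh_eq_sinh_div_cosh]; positivity
  have hs2 : 0 < Real.sinh (2 * t) := by
    rw [Real.sinh_two_mul]; positivity
  set b : ℝ := 1 / (4 * Real.tanh t) with hbdef
  have hb : 0 < b := by positivity
  set C : ℝ := (2 * π) ^ (-(d : ℝ) / 2) * π ^ (-(1 : ℝ) / 2) *
    (Real.sinh (2 * t)) ^ (-(d : ℝ) / 2) with hCdef
  have hC : 0 ≤ C := by positivity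
  have hInt : Integrable (fun x : EuclideanSpace ℝ (Fin d) =>
      C * (‖x - y‖ * rexp (-b * ‖x - y‖ ^ 2))) :=
    (((mehler_aux_integrable hb).comp_sub_right y).const_mul C)
  have step1 : ∫ x : EuclideanSpace ℝ (Fin d), ‖x - y‖ * mehlerKernel d t x y ≤
      ∫ x : EuclideanSpace ℝ (Fin d), C * (‖x - y‖ * rexp (-b * ‖x - y‖ ^ 2)) := by
    refine integral_mono_of_nonneg (Filter.Eventually.of_forall fun x => ?_) hInt
      (Filter.Eventually.of_forall fun x => ?_)
    · have : 0 ≤ mehlerKernel d t x y := by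
        rw [mehlerKernel]; positivity
      exact mul_nonneg (norm_nonneg _) this
    · simp only [mehlerKernel, ← hCdef]
      have h1 : -‖x - y‖ ^ 2 / (4 * Real.tanh t) - Real.tanh t / 4 * ‖x + y‖ ^ 2 ≤
          -b * ‖x - y‖ ^ 2 := by
        have h2 : -‖x - y‖ ^ 2 / (4 * Real.tanh t) = -b * ‖x - y‖ ^ 2 := by
          rw [hbdef]; ring
        nlinarith [mul_nonneg hτ.le (sq_nonneg ‖x + y‖)]
      calc ‖x - y‖ * (C *
            Real.exp (-‖x - y‖ ^ 2 / (4 * Real.tanh t) - Real.tanh t / 4 * ‖x + y‖ ^ 2))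
          ≤ ‖x - y‖ * (C * rexp (-b * ‖x - y‖ ^ 2)) := by gcongr
        _ = C * (‖x - y‖ * rexp (-b * ‖x - y‖ ^ 2)) := by ring
  have step2 : ∫ x : EuclideanSpace ℝ (Fin d), C * (‖x - y‖ * rexp (-b * ‖x - y‖ ^ 2)) =
      C * (π ^ ((d : ℝ) / 2) * b ^ (-((d : ℝ) + 1) / 2) *
        (Real.Gamma (((d : ℝ) + 1) / 2) / Real.Gamma ((d : ℝ) / 2))) := by
    rw [MeasureTheory.integral_const_mul]
    congr 1
    rw [show (∫ x : EuclideanSpace ℝ (Fin d), ‖x - y‖ * rexp (-b * ‖x - y‖ ^ 2)) =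
        ∫ x : EuclideanSpace ℝ (Fin d), ‖x‖ * rexp (-b * ‖x‖ ^ 2) from
      integral_sub_right_eq_self (fun z : EuclideanSpace ℝ (Fin d) =>
        ‖z‖ * rexp (-b * ‖z‖ ^ 2)) y]
    exact mehler_aux_moment d hd hb
  refine le_trans step1 (le_of_eq ?_)
  rw [step2, hCdef, hbdef]
  linear_combination (Real.Gamma (((d : ℝ) + 1) / 2) / Real.Gamma ((d : ℝ) / 2)) *
    (mehler_aux_const d t ht)
end

section
/- For every x ∈ ℝ^d with d ≥ 1, ∫_{ℝ^d} |x| ∫₀^∞ t^{-1/2} K_t(x,y) dt dy ≤ 1/√π + √2, where K_t(x,y) = C_d (sinh 2t)^{-d/2} exp(-|x-y|²/(4 tanh t) - (tanh t/4)|x+y|²) and C_d = (2π)^{-d/2} π^{-1/2}. -/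
open Real MeasureTheory
open scoped RealInnerProductSpace

section Gaussian

lemma cexp_eq_rexp' {d : ℕ} (b c : ℝ) (w v : EuclideanSpace ℝ (Fin d)) :
    Complex.exp (-(b:ℂ) * ‖v‖^2 + (c:ℂ) * ⟪w, v⟫) = ((rexp (-b * ‖v‖^2 + c * ⟪w, v⟫) : ℝ) : ℂ) := by
  rw [Complex.ofReal_exp]
  norm_cast

lemma integrable_rexp_quad {d : ℕ} {b : ℝ} (hb : 0 < b) (c : ℝ) (w : EuclideanSpace ℝ (Fin d)) :
    Integrable (fun v : EuclideanSpace ℝ (Fin d) => rexp (-b * ‖v‖^2 + c * ⟪w, v⟫)) := by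
  have h := (GaussianFourier.integrable_cexp_neg_mul_sq_norm_add
    (V := EuclideanSpace ℝ (Fin d)) (b := (b:ℂ)) (by simpa using hb) (c:ℂ) w).re
  refine h.congr (Filter.Eventually.of_forall fun v => ?_)
  simp only [cexp_eq_rexp']
  exact Complex.ofReal_re _

lemma integral_rexp_quad {d : ℕ} {b : ℝ} (hb : 0 < b) (c : ℝ) (w : EuclideanSpace ℝ (Fin d)) :
    ∫ v : EuclideanSpace ℝ (Fin d), rexp (-b * ‖v‖^2 + c * ⟪w, v⟫)
      = (π / b) ^ ((d:ℝ)/2) * rexp (c^2 * ‖w‖^2 / (4*b)) := by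
  have h := GaussianFourier.integral_cexp_neg_mul_sq_norm_add
    (V := EuclideanSpace ℝ (Fin d)) (b := (b:ℂ)) (by simpa using hb) (c:ℂ) w
  rw [finrank_euclideanSpace_fin] at h
  have hint := GaussianFourier.integrable_cexp_neg_mul_sq_norm_add
    (V := EuclideanSpace ℝ (Fin d)) (b := (b:ℂ)) (by simpa using hb) (c:ℂ) w
  have hre := integral_re (μ := (volume : Measure (EuclideanSpace ℝ (Fin d)))) hint
  calc ∫ v : EuclideanSpace ℝ (Fin d), rexp (-b * ‖v‖^2 + c * ⟪w, v⟫)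
      = ∫ v : EuclideanSpace ℝ (Fin d),
          RCLike.re (Complex.exp (-(b:ℂ) * ‖v‖^2 + (c:ℂ) * ⟪w, v⟫)) := by
        refine integral_congr_ae (Filter.Eventually.of_forall fun v => ?_)
        simp only [cexp_eq_rexp']
        exact (Complex.ofReal_re _).symm
    _ = RCLike.re (∫ v : EuclideanSpace ℝ (Fin d),
          Complex.exp (-(b:ℂ) * ‖v‖^2 + (c:ℂ) * ⟪w, v⟫)) := hre
    _ = RCLike.re ((((π/b) ^ ((d:ℝ)/2) * rexp (c^2 * ‖w‖^2 / (4*b)) : ℝ)) : ℂ) := by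
        rw [h]
        congr 1
        rw [Complex.ofReal_mul, Complex.ofReal_cpow (by positivity), Complex.ofReal_exp]
        push_cast
        ring_nf
    _ = _ := Complex.ofReal_re _

end Gaussian

section TanhFacts

lemma tanh_ge_of_exp {x c : ℝ} (hc : c < 1) (h : (1+c)/(1-c) ≤ exp (2*x)) : c ≤ tanh x := by
  have hE : 0 < exp x := exp_pos x
  have hE2 : exp (2*x) = exp x * exp x := by rw [← exp_add]; ring_nf
  have hinv : exp (-x) = (exp x)⁻¹ := exp_neg x
  have h1 : (1+c) ≤ (1-c) * (exp x * exp x) := by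
    rw [div_le_iff₀ (by linarith)] at h; nlinarith [h]
  have h2 : (exp x)⁻¹ * exp x = 1 := inv_mul_cancel₀ hE.ne'
  rw [tanh_eq_sinh_div_cosh, sinh_eq, cosh_eq, le_div_iff₀ (by positivity), hinv]
  have h3 : 0 < (exp x)⁻¹ := by positivity
  nlinarith [h1, h2, hE, h3]

lemma tanh_mono {a b : ℝ} (hab : a ≤ b) : tanh a ≤ tanh b := by
  rw [tanh_eq_sinh_div_cosh, tanh_eq_sinh_div_cosh,
    div_le_div_iff₀ (cosh_pos a) (cosh_pos b)]
  have h : sinh (a - b) ≤ 0 := Real.sinh_nonpos_iff.mpr (by linarith)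
  rw [Real.sinh_sub] at h
  nlinarith [h]

lemma tanh_32 : (89/100 : ℝ) ≤ tanh (3/2) := by
  apply tanh_ge_of_exp (by norm_num)
  have h1 : (2.7182818283 : ℝ) < exp 1 := exp_one_gt_d9
  have h3 : exp (2 * (3/2 : ℝ)) = exp 1 * exp 1 * exp 1 := by rw [← exp_add, ← exp_add]; norm_num
  rw [h3]; nlinarith [h1]

lemma tanh_34 : (9/16 : ℝ) ≤ tanh (3/4) := by
  apply tanh_ge_of_exp (by norm_num)
  have h1 : (2.7182818283 : ℝ) < exp 1 := exp_one_gt_d9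
  have h2 : (3/2 : ℝ) ≤ exp (1/2) := by
    have := add_one_le_exp (1/2 : ℝ); linarith
  have h3 : exp (2 * (3/4 : ℝ)) = exp 1 * exp (1/2) := by rw [← exp_add]; norm_num
  rw [h3]; nlinarith [h1, h2, exp_pos (1/2 : ℝ)]

lemma tanh_98 : (3/4 : ℝ) ≤ tanh (9/8) := by
  apply tanh_ge_of_exp (by norm_num)
  have h1 : (2.7182818283 : ℝ) < exp 1 := exp_one_gt_d9
  have h2 : (5/4 : ℝ) ≤ exp (1/4) := by
    have := add_one_le_exp (1/4 : ℝ); linarith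
  have h3 : exp (2 * (9/8 : ℝ)) = exp 1 * exp 1 * exp (1/4) := by
    rw [← exp_add, ← exp_add]; norm_num
  rw [h3]; nlinarith [h1, h2, exp_pos (1/4 : ℝ)]

lemma self_le_tanh_two_mul {t : ℝ} (h0 : 0 < t) (h1 : t ≤ 3/4) : t ≤ tanh (2*t) := by
  rcases le_or_gt t (3/8) with hc | hc
  · have hs : 2*t ≤ sinh (2*t) := (Real.self_lt_sinh_iff.mpr (by linarith)).le
    have hcosh : cosh (2*t) ≤ 2 := by
      have hm : cosh (2*t) ≤ cosh (3/4) := by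
        rw [Real.cosh_le_cosh]
        rw [abs_of_nonneg (by linarith : (0:ℝ) ≤ 2*t), abs_of_nonneg (by norm_num : (0:ℝ) ≤ (3/4:ℝ))]
        linarith
      have h34 : cosh (3/4 : ℝ) ≤ 2 := by
        rw [Real.cosh_eq]
        have e1 : exp (3/4 : ℝ) ≤ exp 1 := exp_le_exp.mpr (by norm_num)
        have e2 : exp (-(3/4) : ℝ) ≤ 1 := exp_le_one_iff.mpr (by norm_num)
        have e3 : exp 1 < 2.7182818286 := exp_one_lt_d9
        linarith
      linarith
    rw [tanh_eq_sinh_div_cosh, le_div_iff₀ (cosh_pos _)]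
    nlinarith [hs, hcosh, cosh_pos (2*t)]
  · rcases le_or_gt t (9/16) with hc2 | hc2
    · calc t ≤ 9/16 := hc2
        _ ≤ tanh (3/4) := tanh_34
        _ ≤ tanh (2*t) := tanh_mono (by linarith)
    · calc t ≤ 3/4 := h1
        _ ≤ tanh (9/8) := tanh_98
        _ ≤ tanh (2*t) := tanh_mono (by linarith)

lemma mul_exp_le {u a : ℝ} (hu : 0 ≤ u) (ha : 0 < a) :
    u * exp (-(a * u^2) / 2) ≤ exp (-(1/2) : ℝ) / Real.sqrt a := by
  have hsa : 0 < Real.sqrt a := Real.sqrt_pos.mpr ha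
  have hsq : Real.sqrt a * Real.sqrt a = a := Real.mul_self_sqrt ha.le
  have hE : (a*u^2+1)/2 ≤ exp ((a*u^2-1)/2) := by
    have := add_one_le_exp ((a*u^2-1)/2); linarith
  have key : Real.sqrt a * u ≤ exp ((a*u^2-1)/2) := by
    nlinarith [sq_nonneg (Real.sqrt a * u - 1), hE]
  have hsplit : exp (-(a*u^2)/2) = exp (-(1/2):ℝ) * (exp ((a*u^2-1)/2))⁻¹ := by
    rw [← exp_neg, ← exp_add]; ring_nf
  have hEpos := exp_pos ((a*u^2-1)/2)
  have h2 : u * (exp ((a*u^2-1)/2))⁻¹ ≤ (Real.sqrt a)⁻¹ := by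
    rw [← div_eq_mul_inv, div_le_iff₀ hEpos]
    calc u = (Real.sqrt a)⁻¹ * (Real.sqrt a * u) := by field_simp
      _ ≤ (Real.sqrt a)⁻¹ * exp ((a*u^2-1)/2) := by
          exact mul_le_mul_of_nonneg_left key (by positivity)
  calc u * exp (-(a*u^2)/2) = exp (-(1/2):ℝ) * (u * (exp ((a*u^2-1)/2))⁻¹) := by
        rw [hsplit]; ring
    _ ≤ exp (-(1/2):ℝ) * (Real.sqrt a)⁻¹ := mul_le_mul_of_nonneg_left h2 (exp_pos _).le
    _ = exp (-(1/2):ℝ) / Real.sqrt a := by ring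

end TanhFacts

section GammaHalf

open Set

lemma integrableOn_rpow_exp {b : ℝ} (hb : 0 < b) :
    IntegrableOn (fun t : ℝ => t ^ (-(1/2) : ℝ) * rexp (-(b*t))) (Ioi 0) := by
  have h := integrableOn_rpow_mul_exp_neg_mul_rpow (p := 1) (s := -(1/2)) (b := b)
    (by norm_num) one_pos hb
  refine h.congr_fun (fun t ht => ?_) measurableSet_Ioi
  simp only [Real.rpow_one]
  ring_nf

lemma integral_rpow_exp {b : ℝ} (hb : 0 < b) :
    ∫ t in Ioi (0:ℝ), t ^ (-(1/2) : ℝ) * rexp (-(b*t)) = Real.sqrt π / Real.sqrt b := by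
  have h := Real.integral_rpow_mul_exp_neg_mul_Ioi (a := 1/2) (by norm_num) hb
  rw [show (1/2 - 1 : ℝ) = -(1/2) by norm_num] at h
  rw [h, Real.Gamma_one_half_eq]
  rw [show ((1:ℝ)/b) = b⁻¹ from one_div b, ← Real.sqrt_eq_rpow, Real.sqrt_inv]
  ring

end GammaHalf

section Mehler

lemma mehler_nonneg {d : ℕ} (x y : EuclideanSpace ℝ (Fin d)) {t : ℝ} (ht : 0 < t) :
    0 ≤ mehlerKernel d t x y := by
  have hsinh2 : (0:ℝ) ≤ sinh (2*t) := (Real.sinh_pos_iff.mpr (by linarith)).le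
  unfold mehlerKernel
  have h1 : (0:ℝ) ≤ (2*π) ^ (-(d:ℝ)/2) := Real.rpow_nonneg (by positivity) _
  have h2 : (0:ℝ) ≤ π ^ (-(1:ℝ)/2) := Real.rpow_nonneg pi_pos.le _
  have h3 : (0:ℝ) ≤ (sinh (2*t)) ^ (-(d:ℝ)/2) := Real.rpow_nonneg hsinh2 _
  positivity

lemma mehler_hexp {d : ℕ} (x : EuclideanSpace ℝ (Fin d)) {t : ℝ} (ht : 0 < t) :
    ∀ y : EuclideanSpace ℝ (Fin d), mehlerKernel d t x y =
      ((2*π)^(-(d:ℝ)/2) * π^(-(1:ℝ)/2) * (sinh (2*t))^(-(d:ℝ)/2)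
          * rexp (-(1/(4*tanh t) + tanh t/4)*‖x‖^2)) *
        rexp (-(1/(4*tanh t) + tanh t/4)*‖y‖^2 + (2*(1/(4*tanh t) - tanh t/4))*⟪x,y⟫) := by
  have hsinh : 0 < sinh t := Real.sinh_pos_iff.mpr ht
  have hτ : 0 < tanh t := by
    rw [tanh_eq_sinh_div_cosh]; exact div_pos hsinh (cosh_pos t)
  intro y
  unfold mehlerKernel
  rw [mul_assoc _ (rexp _) (rexp _), ← Real.exp_add]
  congr 1
  have h1 : ‖x - y‖^2 = ‖x‖^2 - 2*⟪x,y⟫ + ‖y‖^2 := by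
    rw [@norm_sub_sq_real]
  have h2 : ‖x + y‖^2 = ‖x‖^2 + 2*⟪x,y⟫ + ‖y‖^2 := by
    rw [@norm_add_sq_real]
  rw [h1, h2]
  field_simp
  ring

lemma mehler_B_pos {t : ℝ} (ht : 0 < t) : 0 < 1/(4*tanh t) + tanh t/4 := by
  have hτ : 0 < tanh t := by
    rw [tanh_eq_sinh_div_cosh]
    exact div_pos (Real.sinh_pos_iff.mpr ht) (cosh_pos t)
  positivity

lemma mehler_integrable {d : ℕ} (x : EuclideanSpace ℝ (Fin d)) {t : ℝ} (ht : 0 < t) :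
    Integrable (fun y => mehlerKernel d t x y) := by
  have := (integrable_rexp_quad (mehler_B_pos ht) (2*(1/(4*tanh t) - tanh t/4)) x).const_mul
    ((2*π)^(-(d:ℝ)/2) * π^(-(1:ℝ)/2) * (sinh (2*t))^(-(d:ℝ)/2)
      * rexp (-(1/(4*tanh t) + tanh t/4)*‖x‖^2))
  refine this.congr (Filter.Eventually.of_forall fun y => ?_)
  exact (mehler_hexp x ht y).symm

lemma mehler_integral {d : ℕ} (x : EuclideanSpace ℝ (Fin d)) {t : ℝ} (ht : 0 < t) :
    ∫ y : EuclideanSpace ℝ (Fin d), mehlerKernel d t x y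
      = π ^ (-(1:ℝ)/2) * (cosh (2*t)) ^ (-(d:ℝ)/2) * rexp (-(tanh (2*t)) * ‖x‖^2 / 2) := by
  have hsinh : 0 < sinh t := Real.sinh_pos_iff.mpr ht
  have hτ : 0 < tanh t := by
    rw [tanh_eq_sinh_div_cosh]; exact div_pos hsinh (cosh_pos t)
  have hsinh2 : 0 < sinh (2*t) := Real.sinh_pos_iff.mpr (by linarith)
  have hcosh2 : 0 < cosh (2*t) := cosh_pos _
  set B : ℝ := 1/(4*tanh t) + tanh t/4 with hBdef
  set C : ℝ := 2*(1/(4*tanh t) - tanh t/4) with hCdef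
  have hB : B = cosh (2*t)/(2*sinh (2*t)) := by
    rw [hBdef, tanh_eq_sinh_div_cosh, cosh_two_mul, sinh_two_mul]
    have := (cosh_pos t).ne'
    field_simp
    ring
  have hBpos : 0 < B := by rw [hB]; positivity
  have htanh2 : tanh (2*t) = 1/(2*B) := by
    rw [hB, tanh_eq_sinh_div_cosh]
    field_simp
  have hC2 : C^2 - 4*B^2 = -1 := by
    rw [hCdef, hBdef]
    field_simp
    ring
  simp_rw [mehler_hexp x ht]
  rw [integral_const_mul, integral_rexp_quad hBpos C x]
  have hexp2 : -B*‖x‖^2 + C^2*‖x‖^2/(4*B) = -(tanh (2*t))*‖x‖^2/2 := by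
    have hCC : C^2 = 4*B^2 - 1 := by linarith
    rw [htanh2, hCC]
    field_simp
    ring
  have hrpow : (2*π)^(-(d:ℝ)/2) * (sinh (2*t))^(-(d:ℝ)/2) * (π/B)^((d:ℝ)/2)
      = (cosh (2*t))^(-(d:ℝ)/2) := by
    have hpi : (0:ℝ) < π := pi_pos
    have h2pi : (0:ℝ) < 2*π := by linarith
    have hπB : π/B = (2*π) * sinh (2*t) / cosh (2*t) := by
      rw [hB]; field_simp
    simp only [neg_div]
    rw [hπB, Real.div_rpow (by positivity) hcosh2.le,
        Real.mul_rpow h2pi.le hsinh2.le,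
        Real.rpow_neg h2pi.le, Real.rpow_neg hsinh2.le, Real.rpow_neg hcosh2.le]
    have e1 : (2*π) ^ ((d:ℝ)/2) ≠ 0 := by positivity
    have e2 : (sinh (2*t)) ^ ((d:ℝ)/2) ≠ 0 := by positivity
    have e3 : (cosh (2*t)) ^ ((d:ℝ)/2) ≠ 0 := by positivity
    field_simp
  calc (2*π)^(-(d:ℝ)/2) * π^(-(1:ℝ)/2) * (sinh (2*t))^(-(d:ℝ)/2) * rexp (-B*‖x‖^2) *
        ((π/B)^((d:ℝ)/2) * rexp (C^2 * ‖x‖^2/(4*B)))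
      = π^(-(1:ℝ)/2) * ((2*π)^(-(d:ℝ)/2) * (sinh (2*t))^(-(d:ℝ)/2) * (π/B)^((d:ℝ)/2)) *
        (rexp (-B*‖x‖^2) * rexp (C^2 * ‖x‖^2/(4*B))) := by ring
    _ = _ := by rw [hrpow, ← Real.exp_add, hexp2]

lemma mehler_measurable (d : ℕ) (x : EuclideanSpace ℝ (Fin d)) :
    Measurable (fun p : (EuclideanSpace ℝ (Fin d)) × ℝ =>
      ENNReal.ofReal (p.2 ^ (-(1/2) : ℝ) * mehlerKernel d p.2 x p.1)) := by
  have htanh_m : Measurable Real.tanh := by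
    have hc : Continuous Real.tanh := by
      rw [show Real.tanh = fun x => Real.sinh x / Real.cosh x from
        funext Real.tanh_eq_sinh_div_cosh]
      exact Real.continuous_sinh.div Real.continuous_cosh (fun x => (Real.cosh_pos x).ne')
    exact hc.measurable
  apply ENNReal.measurable_ofReal.comp
  unfold mehlerKernel
  apply Measurable.mul
  · exact measurable_snd.pow measurable_const
  apply Measurable.mul
  · apply Measurable.mul
    · exact measurable_const
    · exact ((Real.continuous_sinh.measurable).comp (measurable_snd.const_mul 2)).pow
        measurable_const
  · apply Measurable.exp
    apply Measurable.sub
    · apply Measurable.div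
      · exact (((continuous_const.sub continuous_fst).norm.pow 2).neg).measurable
      · exact (htanh_m.comp measurable_snd).const_mul 4
    · exact ((htanh_m.comp measurable_snd).div_const 4).mul
        ((continuous_const.add continuous_fst).norm.pow 2).measurable

end Mehler

section MainBound

open Set

-- final numeric inequality for the tail piece
lemma tail_const_le :
    ((Real.sqrt (3/4))⁻¹ * (Real.sqrt π)⁻¹ * Real.sqrt 2 *
      (rexp (-(1/2) : ℝ) / Real.sqrt (89/100))) * rexp (-(3/4)) ≤ (Real.sqrt π)⁻¹ := by
  have hs2 : Real.sqrt 2 * Real.sqrt 2 = 2 := Real.mul_self_sqrt (by norm_num)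
  have hs34 : Real.sqrt (3/4) * Real.sqrt (3/4) = 3/4 := Real.mul_self_sqrt (by norm_num)
  have hs89 : Real.sqrt (89/100) * Real.sqrt (89/100) = 89/100 := Real.mul_self_sqrt (by norm_num)
  have hp2 : 0 < Real.sqrt 2 := Real.sqrt_pos.mpr (by norm_num)
  have hp34 : 0 < Real.sqrt (3/4) := Real.sqrt_pos.mpr (by norm_num)
  have hp89 : 0 < Real.sqrt (89/100) := Real.sqrt_pos.mpr (by norm_num)
  have hpπ : 0 < Real.sqrt π := Real.sqrt_pos.mpr pi_pos
  have hA : rexp (-(1/2) : ℝ) * rexp (-(3/4)) = rexp (-(5/4)) := by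
    rw [← exp_add]; norm_num
  have hAA : rexp (-(5/4) : ℝ) * rexp (-(5/4)) * rexp (5/2) = 1 := by
    rw [← exp_add, ← exp_add]; norm_num
  have hApos : 0 < rexp (-(5/4) : ℝ) := exp_pos _
  have hbig : (3 : ℝ) ≤ rexp (5/2) := by
    have h1 : (2.7182818283 : ℝ) < exp 1 := exp_one_gt_d9
    have h2 : (3/2 : ℝ) ≤ exp (1/2) := by have := add_one_le_exp (1/2 : ℝ); linarith
    have h3 : exp (5/2 : ℝ) = exp 1 * exp 1 * exp (1/2) := by
      rw [← exp_add, ← exp_add]; norm_num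
    rw [h3]; nlinarith [h1, h2, exp_pos (1/2:ℝ)]
  -- key: √2 * e^{-5/4} ≤ √(3/4) * √(89/100)
  have hkey : Real.sqrt 2 * rexp (-(5/4)) ≤ Real.sqrt (3/4) * Real.sqrt (89/100) := by
    have hsq : (Real.sqrt 2 * rexp (-(5/4)))^2 ≤ (Real.sqrt (3/4) * Real.sqrt (89/100))^2 := by
      have hA2 : rexp (-(5/4) : ℝ) * rexp (-(5/4)) ≤ 1/3 := by
        nlinarith [hAA, hbig, hApos]
      nlinarith [hA2, hs2, hs34, hs89]
    nlinarith [hsq, mul_pos hp2 hApos, mul_pos hp34 hp89]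
  -- reduce goal to hkey
  have goal_eq : (Real.sqrt (3/4))⁻¹ * (Real.sqrt π)⁻¹ * Real.sqrt 2 *
      (rexp (-(1/2):ℝ) / Real.sqrt (89/100)) * rexp (-(3/4))
      = (Real.sqrt π)⁻¹ * ((Real.sqrt 2 * rexp (-(5/4))) / (Real.sqrt (3/4) * Real.sqrt (89/100))) := by
    rw [← hA]; field_simp
  rw [goal_eq]
  calc (Real.sqrt π)⁻¹ * ((Real.sqrt 2 * rexp (-(5/4))) / (Real.sqrt (3/4) * Real.sqrt (89/100)))
      ≤ (Real.sqrt π)⁻¹ * 1 := by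
        apply mul_le_mul_of_nonneg_left _ (by positivity)
        rw [div_le_one (by positivity)]
        exact hkey
    _ = (Real.sqrt π)⁻¹ := mul_one _

lemma phi_bound (d : ℕ) (hd : 1 ≤ d) {r : ℝ} (hr : 0 < r) :
    ∫⁻ t in Ioi (0:ℝ), ENNReal.ofReal (r * (t ^ (-(1/2) : ℝ) *
        (π ^ (-(1:ℝ)/2) * (cosh (2*t)) ^ (-(d:ℝ)/2) * rexp (-(tanh (2*t)) * r^2 / 2))))
      ≤ ENNReal.ofReal (1 / Real.sqrt π + Real.sqrt 2) := by
  have hπ : π ^ (-(1:ℝ)/2) = (Real.sqrt π)⁻¹ := by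
    rw [neg_div, Real.rpow_neg pi_pos.le, ← Real.sqrt_eq_rpow]
  have hd1 : (1:ℝ) ≤ (d:ℝ) := by exact_mod_cast hd
  -- split the integral
  rw [← Set.Ioc_union_Ioi_eq_Ioi (by norm_num : (0:ℝ) ≤ 3/4),
    lintegral_union measurableSet_Ioi (Set.Ioc_disjoint_Ioi le_rfl)]
  have piece1 : ∫⁻ t in Ioc (0:ℝ) (3/4), ENNReal.ofReal (r * (t ^ (-(1/2) : ℝ) *
        (π ^ (-(1:ℝ)/2) * (cosh (2*t)) ^ (-(d:ℝ)/2) * rexp (-(tanh (2*t)) * r^2 / 2))))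
      ≤ ENNReal.ofReal (Real.sqrt 2) := by
    have hb : 0 < r^2/2 := by positivity
    have hint1 : IntegrableOn (fun t : ℝ =>
        (r * (Real.sqrt π)⁻¹) * (t ^ (-(1/2):ℝ) * rexp (-(r^2/2 * t)))) (Ioi 0) := by
      have h := (integrableOn_rpow_exp hb).const_mul (r * (Real.sqrt π)⁻¹)
      exact h.congr (Filter.Eventually.of_forall fun t => by ring)
    have hval1 : ∫ t in Ioi (0:ℝ),
        (r * (Real.sqrt π)⁻¹) * (t ^ (-(1/2):ℝ) * rexp (-(r^2/2 * t))) = Real.sqrt 2 := by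
      rw [integral_const_mul, integral_rpow_exp hb]
      have hs : Real.sqrt (r^2/2) = r / Real.sqrt 2 := by
        rw [show r^2/2 = (r/Real.sqrt 2)^2 by
          rw [div_pow, Real.sq_sqrt (by norm_num : (0:ℝ) ≤ 2)]]
        exact Real.sqrt_sq (by positivity)
      rw [hs]
      have hπ0 : Real.sqrt π ≠ 0 := (Real.sqrt_pos.mpr pi_pos).ne'
      have h20 : Real.sqrt 2 ≠ 0 := (Real.sqrt_pos.mpr (by norm_num)).ne'
      field_simp
    calc ∫⁻ t in Ioc (0:ℝ) (3/4), ENNReal.ofReal (r * (t ^ (-(1/2) : ℝ) *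
            (π ^ (-(1:ℝ)/2) * (cosh (2*t)) ^ (-(d:ℝ)/2) * rexp (-(tanh (2*t)) * r^2 / 2))))
        ≤ ∫⁻ t in Ioc (0:ℝ) (3/4), ENNReal.ofReal
            ((r * (Real.sqrt π)⁻¹) * (t ^ (-(1/2):ℝ) * rexp (-(r^2/2 * t)))) := by
          apply setLIntegral_mono' measurableSet_Ioc
          intro t ht
          apply ENNReal.ofReal_le_ofReal
          have ht0 : 0 < t := ht.1
          have hC : (cosh (2*t)) ^ (-(d:ℝ)/2) ≤ 1 :=
            Real.rpow_le_one_of_one_le_of_nonpos (one_le_cosh _) (by linarith)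
          have hC0 : 0 ≤ (cosh (2*t)) ^ (-(d:ℝ)/2) := Real.rpow_nonneg (cosh_pos _).le _
          have hE : rexp (-(tanh (2*t)) * r^2 / 2) ≤ rexp (-(r^2/2 * t)) := by
            apply exp_le_exp.mpr
            have := self_le_tanh_two_mul ht0 ht.2
            nlinarith [sq_nonneg r, this]
          have hE0 : 0 ≤ rexp (-(tanh (2*t)) * r^2 / 2) := (exp_pos _).le
          have ht12 : 0 ≤ t ^ (-(1/2):ℝ) := Real.rpow_nonneg ht0.le _
          rw [hπ]
          calc r * (t ^ (-(1/2):ℝ) * ((Real.sqrt π)⁻¹ * (cosh (2*t)) ^ (-(d:ℝ)/2) *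
                rexp (-(tanh (2*t)) * r^2 / 2)))
              ≤ r * (t ^ (-(1/2):ℝ) * ((Real.sqrt π)⁻¹ * 1 * rexp (-(r^2/2 * t)))) := by
                gcongr
              _ = (r * (Real.sqrt π)⁻¹) * (t ^ (-(1/2):ℝ) * rexp (-(r^2/2 * t))) := by ring
      _ ≤ ∫⁻ t in Ioi (0:ℝ), ENNReal.ofReal
            ((r * (Real.sqrt π)⁻¹) * (t ^ (-(1/2):ℝ) * rexp (-(r^2/2 * t)))) :=
          lintegral_mono_set Set.Ioc_subset_Ioi_self
      _ = ENNReal.ofReal (Real.sqrt 2) := by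
          rw [← hval1]
          refine (ofReal_integral_eq_lintegral_ofReal hint1 ?_).symm
          refine (ae_restrict_iff' measurableSet_Ioi).mpr (Filter.Eventually.of_forall
            fun t (ht : t ∈ Ioi (0:ℝ)) => ?_)
          have : (0:ℝ) < t := ht
          positivity
  have piece2 : ∫⁻ t in Ioi (3/4 : ℝ), ENNReal.ofReal (r * (t ^ (-(1/2) : ℝ) *
        (π ^ (-(1:ℝ)/2) * (cosh (2*t)) ^ (-(d:ℝ)/2) * rexp (-(tanh (2*t)) * r^2 / 2))))
      ≤ ENNReal.ofReal ((Real.sqrt π)⁻¹) := by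
    set K0 : ℝ := (Real.sqrt (3/4))⁻¹ * (Real.sqrt π)⁻¹ * Real.sqrt 2 *
      (rexp (-(1/2) : ℝ) / Real.sqrt (89/100)) with hK0
    have hK0pos : 0 < K0 := by rw [hK0]; positivity
    calc ∫⁻ t in Ioi (3/4 : ℝ), ENNReal.ofReal (r * (t ^ (-(1/2) : ℝ) *
            (π ^ (-(1:ℝ)/2) * (cosh (2*t)) ^ (-(d:ℝ)/2) * rexp (-(tanh (2*t)) * r^2 / 2))))
        ≤ ∫⁻ t in Ioi (3/4 : ℝ), ENNReal.ofReal (K0 * rexp (-t)) := by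
          apply setLIntegral_mono' measurableSet_Ioi
          intro t ht
          apply ENNReal.ofReal_le_ofReal
          have ht34 : (3/4 : ℝ) ≤ t := le_of_lt ht
          have ht0 : (0:ℝ) < t := by linarith
          have h1 : t ^ (-(1/2):ℝ) ≤ (Real.sqrt (3/4))⁻¹ := by
            rw [show t ^ (-(1/2):ℝ) = (Real.sqrt t)⁻¹ by
              rw [Real.rpow_neg ht0.le, ← Real.sqrt_eq_rpow]]
            exact inv_anti₀ (Real.sqrt_pos.mpr (by norm_num)) (Real.sqrt_le_sqrt ht34)
          have h2 : (cosh (2*t)) ^ (-(d:ℝ)/2) ≤ Real.sqrt 2 * rexp (-t) := by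
            have s1 : (cosh (2*t)) ^ (-(d:ℝ)/2) ≤ (cosh (2*t)) ^ (-(1:ℝ)/2) :=
              Real.rpow_le_rpow_of_exponent_le (one_le_cosh _) (by linarith)
            have hecosh : rexp (2*t)/2 ≤ cosh (2*t) := by
              rw [Real.cosh_eq]; have := exp_pos (-(2*t)); linarith
            have s2 : (cosh (2*t)) ^ (-(1:ℝ)/2) ≤ (rexp (2*t)/2) ^ (-(1:ℝ)/2) :=
              Real.rpow_le_rpow_of_nonpos (by positivity) hecosh (by norm_num)
            have s3 : (rexp (2*t)/2) ^ (-(1:ℝ)/2) = Real.sqrt 2 * rexp (-t) := by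
              rw [neg_div, Real.rpow_neg (by positivity), ← Real.sqrt_eq_rpow]
              have : Real.sqrt (rexp (2*t)/2) = rexp t / Real.sqrt 2 := by
                rw [show rexp (2*t)/2 = (rexp t / Real.sqrt 2)^2 by
                  rw [div_pow, Real.sq_sqrt (by norm_num : (0:ℝ) ≤ 2), sq, ← Real.exp_add]
                  ring_nf]
                exact Real.sqrt_sq (by positivity)
              rw [this, Real.exp_neg]
              have h20 : Real.sqrt 2 ≠ 0 := (Real.sqrt_pos.mpr (by norm_num)).ne'
              field_simp
            calc (cosh (2*t)) ^ (-(d:ℝ)/2) ≤ (cosh (2*t)) ^ (-(1:ℝ)/2) := s1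
              _ ≤ (rexp (2*t)/2) ^ (-(1:ℝ)/2) := s2
              _ = Real.sqrt 2 * rexp (-t) := s3
          have h3 : r * rexp (-(tanh (2*t)) * r^2 / 2)
              ≤ rexp (-(1/2):ℝ) / Real.sqrt (89/100) := by
            have htt : (89/100:ℝ) ≤ tanh (2*t) :=
              le_trans tanh_32 (tanh_mono (by linarith))
            calc r * rexp (-(tanh (2*t)) * r^2 / 2)
                ≤ r * rexp (-((89/100) * r^2) / 2) := by
                  apply mul_le_mul_of_nonneg_left _ hr.le
                  apply exp_le_exp.mpr
                  nlinarith [htt, sq_nonneg r]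
              _ ≤ rexp (-(1/2):ℝ) / Real.sqrt (89/100) := mul_exp_le hr.le (by norm_num)
          have ht12 : 0 ≤ t ^ (-(1/2):ℝ) := Real.rpow_nonneg ht0.le _
          have hC0 : 0 ≤ (cosh (2*t)) ^ (-(d:ℝ)/2) := Real.rpow_nonneg (cosh_pos _).le _
          have hsπ : 0 ≤ (Real.sqrt π)⁻¹ := by positivity
          calc r * (t ^ (-(1/2) : ℝ) *
                (π ^ (-(1:ℝ)/2) * (cosh (2*t)) ^ (-(d:ℝ)/2) * rexp (-(tanh (2*t)) * r^2 / 2)))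
              = (t ^ (-(1/2):ℝ)) * (π ^ (-(1:ℝ)/2)) * ((cosh (2*t)) ^ (-(d:ℝ)/2)) *
                (r * rexp (-(tanh (2*t)) * r^2 / 2)) := by ring
            _ ≤ (Real.sqrt (3/4))⁻¹ * (π ^ (-(1:ℝ)/2)) * (Real.sqrt 2 * rexp (-t)) *
                (rexp (-(1/2):ℝ) / Real.sqrt (89/100)) := by
                apply mul_le_mul
                · apply mul_le_mul
                  · apply mul_le_mul h1 le_rfl (by rw [hπ]; positivity) (by positivity)
                  · exact h2
                  · exact hC0
                  · positivity
                · exact h3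
                · positivity
                · positivity
            _ = K0 * rexp (-t) := by rw [hK0, hπ]; ring
      _ = ENNReal.ofReal (K0 * rexp (-(3/4))) := by
          have hint2 : IntegrableOn (fun t : ℝ => K0 * rexp (-t)) (Ioi (3/4 : ℝ)) := by
            have h := (exp_neg_integrableOn_Ioi (3/4 : ℝ) (one_pos)).const_mul K0
            exact h.congr (Filter.Eventually.of_forall fun t => by norm_num)
          rw [← ofReal_integral_eq_lintegral_ofReal hint2
            (Filter.Eventually.of_forall fun t => by positivity)]
          rw [integral_const_mul, integral_exp_neg_Ioi]
      _ ≤ ENNReal.ofReal ((Real.sqrt π)⁻¹) := by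
          apply ENNReal.ofReal_le_ofReal
          rw [hK0]
          exact tail_const_le
  calc (∫⁻ t in Ioc (0:ℝ) (3/4), ENNReal.ofReal (r * (t ^ (-(1/2) : ℝ) *
          (π ^ (-(1:ℝ)/2) * (cosh (2*t)) ^ (-(d:ℝ)/2) * rexp (-(tanh (2*t)) * r^2 / 2)))))
        + ∫⁻ t in Ioi (3/4 : ℝ), ENNReal.ofReal (r * (t ^ (-(1/2) : ℝ) *
          (π ^ (-(1:ℝ)/2) * (cosh (2*t)) ^ (-(d:ℝ)/2) * rexp (-(tanh (2*t)) * r^2 / 2))))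
      ≤ ENNReal.ofReal (Real.sqrt 2) + ENNReal.ofReal ((Real.sqrt π)⁻¹) :=
        add_le_add piece1 piece2
    _ = ENNReal.ofReal (1 / Real.sqrt π + Real.sqrt 2) := by
        rw [← ENNReal.ofReal_add (by positivity) (by positivity)]
        congr 1
        rw [one_div]
        ring

end MainBound

theorem mehler_kernel_diagonal_bound (d : ℕ) (hd : 1 ≤ d)
    (x : EuclideanSpace ℝ (Fin d)) :
    ∫ y : EuclideanSpace ℝ (Fin d),
        ‖x‖ * ∫ t in Set.Ioi (0 : ℝ), t ^ (-(1 / 2) : ℝ) * mehlerKernel d t x y ≤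
      1 / Real.sqrt Real.pi + Real.sqrt 2 := by
  rcases eq_or_lt_of_le (norm_nonneg x) with hr0 | hr
  · simp only [← hr0, zero_mul, integral_zero]
    positivity
  set g : EuclideanSpace ℝ (Fin d) → ℝ :=
    fun y => ‖x‖ * ∫ t in Set.Ioi (0:ℝ), t ^ (-(1/2) : ℝ) * mehlerKernel d t x y with hgdef
  have hg0 : ∀ y, 0 ≤ g y := by
    intro y
    apply mul_nonneg (norm_nonneg x)
    apply setIntegral_nonneg measurableSet_Ioi
    intro t ht
    exact mul_nonneg (Real.rpow_nonneg (le_of_lt ht) _) (mehler_nonneg x y ht)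
  by_cases hint : Integrable g volume
  swap
  · rw [integral_undef hint]; positivity
  rw [integral_eq_lintegral_of_nonneg_ae (ae_of_all _ hg0) hint.aestronglyMeasurable]
  apply ENNReal.toReal_le_of_le_ofReal (by positivity)
  -- step 1: pointwise bound by iterated lintegral
  have step1 : ∀ y, ENNReal.ofReal (g y) ≤ ENNReal.ofReal ‖x‖ *
      ∫⁻ t in Set.Ioi (0:ℝ), ENNReal.ofReal (t ^ (-(1/2) : ℝ) * mehlerKernel d t x y) := by
    intro y
    rw [hgdef, ENNReal.ofReal_mul (norm_nonneg x)]
    apply mul_le_mul_right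
    by_cases hI : IntegrableOn
        (fun t : ℝ => t ^ (-(1/2) : ℝ) * mehlerKernel d t x y) (Set.Ioi 0)
    · rw [ofReal_integral_eq_lintegral_ofReal hI]
      refine (ae_restrict_iff' measurableSet_Ioi).mpr (Filter.Eventually.of_forall
        fun t (ht : t ∈ Set.Ioi (0:ℝ)) => ?_)
      exact mul_nonneg (Real.rpow_nonneg (le_of_lt ht) _) (mehler_nonneg x y ht)
    · rw [integral_undef hI]
      simp
  have hmeas := mehler_measurable d x
  calc ∫⁻ y, ENNReal.ofReal (g y)
      ≤ ∫⁻ y, ENNReal.ofReal ‖x‖ *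
          ∫⁻ t in Set.Ioi (0:ℝ), ENNReal.ofReal (t ^ (-(1/2) : ℝ) * mehlerKernel d t x y) :=
        lintegral_mono step1
    _ = ENNReal.ofReal ‖x‖ * ∫⁻ y, ∫⁻ t in Set.Ioi (0:ℝ),
          ENNReal.ofReal (t ^ (-(1/2) : ℝ) * mehlerKernel d t x y) :=
        lintegral_const_mul' _ _ ENNReal.ofReal_ne_top
    _ = ENNReal.ofReal ‖x‖ * ∫⁻ t in Set.Ioi (0:ℝ), ∫⁻ y,
          ENNReal.ofReal (t ^ (-(1/2) : ℝ) * mehlerKernel d t x y) := by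
        rw [lintegral_lintegral_swap hmeas.aemeasurable]
    _ = ENNReal.ofReal ‖x‖ * ∫⁻ t in Set.Ioi (0:ℝ), ENNReal.ofReal (t ^ (-(1/2) : ℝ) *
          (π ^ (-(1:ℝ)/2) * (cosh (2*t)) ^ (-(d:ℝ)/2) * rexp (-(tanh (2*t)) * ‖x‖^2 / 2))) := by
        congr 1
        apply setLIntegral_congr_fun measurableSet_Ioi
        refine (fun t (ht : t ∈ Set.Ioi (0:ℝ)) => ?_)
        have ht0 : (0:ℝ) < t := ht
        have h12 : (0:ℝ) ≤ t ^ (-(1/2) : ℝ) := Real.rpow_nonneg ht0.le _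
        calc ∫⁻ y, ENNReal.ofReal (t ^ (-(1/2) : ℝ) * mehlerKernel d t x y)
            = ∫⁻ y, ENNReal.ofReal (t ^ (-(1/2) : ℝ)) *
                ENNReal.ofReal (mehlerKernel d t x y) := by
              simp_rw [ENNReal.ofReal_mul h12]
          _ = ENNReal.ofReal (t ^ (-(1/2) : ℝ)) *
                ∫⁻ y, ENNReal.ofReal (mehlerKernel d t x y) :=
              lintegral_const_mul' _ _ ENNReal.ofReal_ne_top
          _ = ENNReal.ofReal (t ^ (-(1/2) : ℝ)) *
                ENNReal.ofReal (∫ y, mehlerKernel d t x y) := by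
              rw [ofReal_integral_eq_lintegral_ofReal (mehler_integrable x ht0)
                (ae_of_all _ fun y => mehler_nonneg x y ht0)]
          _ = _ := by
              rw [mehler_integral x ht0, ← ENNReal.ofReal_mul h12]
    _ = ∫⁻ t in Set.Ioi (0:ℝ), ENNReal.ofReal (‖x‖ * (t ^ (-(1/2) : ℝ) *
          (π ^ (-(1:ℝ)/2) * (cosh (2*t)) ^ (-(d:ℝ)/2) * rexp (-(tanh (2*t)) * ‖x‖^2 / 2)))) := by
        rw [← lintegral_const_mul' _ _ ENNReal.ofReal_ne_top]
        apply lintegral_congr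
        intro t
        rw [ENNReal.ofReal_mul (norm_nonneg x)]
    _ ≤ ENNReal.ofReal (1 / Real.sqrt π + Real.sqrt 2) := phi_bound d hd hr
end
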